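/- arXiv:1611.06193 — 2 statements merged into one kernel-verified Lean document; each statement's English description precedes it below -/
import Mathlib

section
/- Let C be a d-dimensional copula of the random vector U = (U₁,...,U_d) with uniform margins, let λ₁,...,λ_d > 0, and suppose the limit a_U(w) = lim_{u→0⁺} P(∃i: Uᵢ > 1 − u^{λᵢ} wᵢ)/(u ℓ(u)) exists and is continuous in w ∈ (0,∞)^d, with ℓ slowly varying at 0. Let F̄ᵢ(t) = t^{−αᵢ} Lᵢ(t) with αᵢ > 0 and Lᵢ(t) → lᵢ > 0. If Xᵢ = F̄ᵢ⁻¹(1 − Uᵢ) (so X has copula C and margins Fᵢ), then for all w ∈ (0,∞)^d, lim_{t→∞} P(∃i: Xᵢ > t^{λᵢα₁/αᵢ} wᵢ) / (F̄₁(t) ℓ(F̄₁(t))) = a_U(w₁^{−α₁} r₁, ..., w_d^{−α_d} r_d), where rᵢ = lᵢ / l₁^{λᵢ}. -/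
open Filter MeasureTheory

/-- Theorem 3.1 (TDF-MRV): if the copula of `U` has a continuous upper operator exponent
function `a_U` with diagonal matrix index `diag(λ₁,...,λ_d)`, and the margins
`F̄ᵢ(t) = t^{−αᵢ} Lᵢ(t)` are regularly varying with `Lᵢ(t) → lᵢ > 0`, then
`X` with `Xᵢ = F̄ᵢ⁻¹(1 − Uᵢ)` is non-standard regularly varying: for every `w > 0`,
`P(∃i: Xᵢ > t^{λᵢα₁/αᵢ} wᵢ)/(F̄₁(t) ℓ(F̄₁(t))) → a_U(w₁^{−α₁}r₁, ..., w_d^{−α_d}r_d)`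
as `t → ∞`, where `rᵢ = lᵢ/l₁^{λᵢ}`. -/
theorem copula_operator_tail_implies_nonstandard_MRV
    {d : ℕ} [NeZero d] {Ω : Type*} [MeasurableSpace Ω]
    (P : Measure Ω) [IsProbabilityMeasure P]
    (U : Ω → Fin d → ℝ)
    (hrange : ∀ ω i, U ω i ∈ Set.Icc (0 : ℝ) 1)
    (hunif : ∀ i, ∀ s ∈ Set.Icc (0 : ℝ) 1, P {ω | U ω i ≤ s} = ENNReal.ofReal s)
    (lam : Fin d → ℝ) (hlam : ∀ i, 0 < lam i)
    (ℓ : ℝ → ℝ) (hℓpos : ∀ u : ℝ, 0 < u → u ≤ 1 → 0 < ℓ u)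
    (hℓ : ∀ s : ℝ, 0 < s →
      Tendsto (fun t : ℝ => ℓ (t * s) / ℓ t) (nhdsWithin 0 (Set.Ioi 0)) (nhds 1))
    (aU : (Fin d → ℝ) → ℝ)
    (haU : ∀ w : Fin d → ℝ, (∀ i, 0 < w i) →
      Tendsto (fun u : ℝ =>
          (P {ω | ∃ i, 1 - u ^ lam i * w i < U ω i}).toReal / (u * ℓ u))
        (nhdsWithin 0 (Set.Ioi 0)) (nhds (aU w)))
    (haUcont : ContinuousOn aU {w : Fin d → ℝ | ∀ i, 0 < w i})
    (Fbar : Fin d → ℝ → ℝ) (L : Fin d → ℝ → ℝ) (α : Fin d → ℝ) (l : Fin d → ℝ)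
    (hα : ∀ i, 0 < α i) (hl : ∀ i, 0 < l i)
    (hFbar : ∀ i, ∀ t : ℝ, 0 < t → Fbar i t = t ^ (-(α i)) * L i t)
    (hL : ∀ i, Tendsto (L i) atTop (nhds (l i)))
    (hanti : ∀ i, StrictAntiOn (Fbar i) (Set.Ioi 0))
    (X : Fin d → Ω → ℝ)
    (hXpos : ∀ i ω, 0 < X i ω)
    (hX : ∀ i ω, Fbar i (X i ω) = 1 - U ω i) :
    ∀ w : Fin d → ℝ, (∀ i, 0 < w i) →
      Tendsto (fun t : ℝ =>
          (P {ω | ∃ i, t ^ (lam i * α 0 / α i) * w i < X i ω}).toReal /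
            (Fbar 0 t * ℓ (Fbar 0 t)))
        atTop
        (nhds (aU fun i => w i ^ (-(α i)) * (l i / l 0 ^ lam i))) := by
  intro w hw
  set v : Fin d → ℝ := fun i => w i ^ (-(α i)) * (l i / l 0 ^ lam i) with hv_def
  have hv : ∀ i, 0 < v i := fun i =>
    mul_pos (Real.rpow_pos_of_pos (hw i) _)
      (div_pos (hl i) (Real.rpow_pos_of_pos (hl 0) _))
  -- eventual positivity of L 0
  have hL0pos : ∀ᶠ t in atTop, 0 < L 0 t := (hL 0).eventually (lt_mem_nhds (hl 0))
  -- u t = Fbar 0 t tends to 0 within Ioi 0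
  have hu_nhds : Tendsto (fun t => Fbar 0 t) atTop (nhds 0) := by
    have h1 : Tendsto (fun t : ℝ => t ^ (-(α 0)) * L 0 t) atTop (nhds 0) := by
      have := (tendsto_rpow_neg_atTop (hα 0)).mul (hL 0)
      rwa [zero_mul] at this
    refine h1.congr' ?_
    filter_upwards [eventually_ge_atTop (1 : ℝ)] with t ht
    exact (hFbar 0 t (by linarith)).symm
  have hu_mem : ∀ᶠ t in atTop, Fbar 0 t ∈ Set.Ioi (0 : ℝ) := by
    filter_upwards [eventually_ge_atTop (1 : ℝ), hL0pos] with t ht hp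
    have htpos : (0 : ℝ) < t := by linarith
    rw [Set.mem_Ioi, hFbar 0 t htpos]
    exact mul_pos (Real.rpow_pos_of_pos htpos _) hp
  have hu0 : Tendsto (fun t => Fbar 0 t) atTop (nhdsWithin 0 (Set.Ioi 0)) :=
    tendsto_nhdsWithin_iff.2 ⟨hu_nhds, hu_mem⟩
  -- the ratio Fbar i (t^c * w i) / (Fbar 0 t)^(lam i) tends to v i
  have hRt : ∀ i, Tendsto
      (fun t => Fbar i (t ^ (lam i * α 0 / α i) * w i) / (Fbar 0 t) ^ lam i)
      atTop (nhds (v i)) := by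
    intro i
    have hc : 0 < lam i * α 0 / α i := by
      exact div_pos (mul_pos (hlam i) (hα 0)) (hα i)
    have hs : Tendsto (fun t : ℝ => t ^ (lam i * α 0 / α i) * w i) atTop atTop :=
      (tendsto_rpow_atTop hc).atTop_mul_const (hw i)
    have hnum : Tendsto (fun t => L i (t ^ (lam i * α 0 / α i) * w i)) atTop (nhds (l i)) :=
      (hL i).comp hs
    have hden : Tendsto (fun t => (L 0 t) ^ lam i) atTop (nhds (l 0 ^ lam i)) :=
      ((Real.continuousAt_rpow_const (l 0) (lam i) (Or.inl (hl 0).ne')).tendsto).comp (hL 0)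
    have key := (hnum.div hden (ne_of_gt (Real.rpow_pos_of_pos (hl 0) _))).const_mul
      (w i ^ (-(α i)))
    have hval : v i = w i ^ (-(α i)) * (l i / l 0 ^ lam i) := rfl
    rw [hval]
    refine key.congr' ?_
    filter_upwards [eventually_ge_atTop (1 : ℝ), hL0pos] with t ht hp
    have htpos : (0 : ℝ) < t := by linarith
    have hspos : 0 < t ^ (lam i * α 0 / α i) * w i :=
      mul_pos (Real.rpow_pos_of_pos htpos _) (hw i)
    have hexp : (lam i * α 0 / α i) * (-(α i)) = -(lam i * α 0) := by
      rw [div_mul_eq_mul_div, mul_neg, neg_div, mul_div_assoc, div_self (hα i).ne', mul_one]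
    have e1 : Fbar i (t ^ (lam i * α 0 / α i) * w i)
        = t ^ (-(lam i * α 0)) * (w i ^ (-(α i)) * L i (t ^ (lam i * α 0 / α i) * w i)) := by
      rw [hFbar i _ hspos, Real.mul_rpow (Real.rpow_nonneg htpos.le _) (hw i).le,
        ← Real.rpow_mul htpos.le, hexp]
      ring
    have e2 : (Fbar 0 t) ^ lam i = t ^ (-(lam i * α 0)) * (L 0 t) ^ lam i := by
      rw [hFbar 0 t htpos, Real.mul_rpow (Real.rpow_nonneg htpos.le _) hp.le,
        ← Real.rpow_mul htpos.le]
      congr 2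
      ring
    simp only [Pi.div_apply]
    rw [e1, e2, mul_div_mul_left _ _ (ne_of_gt (Real.rpow_pos_of_pos htpos _))]
    exact (mul_div_assoc _ _ _).symm
  -- continuity of aU at v
  have hopen : IsOpen {x : Fin d → ℝ | ∀ i, 0 < x i} := by
    have hset : {x : Fin d → ℝ | ∀ i, 0 < x i} = ⋂ i, {x : Fin d → ℝ | 0 < x i} := by
      ext x; simp [Set.mem_iInter]
    rw [hset]
    exact isOpen_iInter_of_finite fun i => isOpen_lt continuous_const (continuous_apply i)
  have hca : ContinuousAt aU v := haUcont.continuousAt (hopen.mem_nhds hv)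
  have hφ : ContinuousAt (fun s : ℝ => aU (fun i => s * v i)) 1 := by
    have hcs : ContinuousAt (fun s : ℝ => (fun i => s * v i)) 1 :=
      continuousAt_pi.2 fun i => continuousAt_id.mul continuousAt_const
    have hone : (fun i => (1 : ℝ) * v i) = v := by funext i; rw [one_mul]
    have hca' : ContinuousAt aU (fun i => (1 : ℝ) * v i) := by rw [hone]; exact hca
    exact hca'.comp hcs
  rw [Metric.tendsto_nhds]
  intro ε hε
  obtain ⟨δ₀, hδ₀pos, hδ₀⟩ := Metric.continuousAt_iff.1 hφ (ε / 2) (by linarith)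
  set δ : ℝ := min (δ₀ / 2) (1 / 2) with hδdef
  have hδpos : 0 < δ := lt_min (by linarith) (by norm_num)
  have hδlt1 : δ < 1 := lt_of_le_of_lt (min_le_right _ _) (by norm_num)
  have hdist : ∀ s : ℝ, |s - 1| < δ₀ → |aU (fun i => s * v i) - aU v| < ε / 2 := by
    intro s hs
    have h := hδ₀ (x := s) (by rwa [Real.dist_eq])
    simp only [Real.dist_eq, one_mul] at h
    exact h
  have hδδ₀ : δ < δ₀ := lt_of_le_of_lt (min_le_left _ _) (by linarith)
  have hm : |aU (fun i => (1 - δ) * v i) - aU v| < ε / 2 := by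
    refine hdist _ ?_
    rw [show (1 - δ) - 1 = -δ by ring, abs_neg, abs_of_pos hδpos]
    exact hδδ₀
  have hp : |aU (fun i => (1 + δ) * v i) - aU v| < ε / 2 := by
    refine hdist _ ?_
    rw [show (1 + δ) - 1 = δ by ring, abs_of_pos hδpos]
    exact hδδ₀
  have hwm : ∀ i, 0 < (1 - δ) * v i := fun i => mul_pos (by linarith) (hv i)
  have hwp : ∀ i, 0 < (1 + δ) * v i := fun i => mul_pos (by linarith) (hv i)
  have hGm := (haU (fun i => (1 - δ) * v i) hwm).comp hu0
  have hGp := (haU (fun i => (1 + δ) * v i) hwp).comp hu0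
  have hRbd : ∀ᶠ t in atTop, ∀ i,
      Fbar i (t ^ (lam i * α 0 / α i) * w i) / (Fbar 0 t) ^ lam i ∈
        Set.Icc ((1 - δ) * v i) ((1 + δ) * v i) := by
    rw [eventually_all]
    intro i
    have h1 : (1 - δ) * v i < v i := by nlinarith [hv i]
    have h2 : v i < (1 + δ) * v i := by nlinarith [hv i]
    exact (hRt i).eventually_mem (Icc_mem_nhds h1 h2)
  have hu_lt1 : ∀ᶠ t in atTop, Fbar 0 t < 1 := hu_nhds.eventually (gt_mem_nhds one_pos)
  filter_upwards [eventually_ge_atTop (1 : ℝ), hu_mem, hu_lt1, hRbd,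
    Metric.tendsto_nhds.1 hGm (ε / 2) (by linarith),
    Metric.tendsto_nhds.1 hGp (ε / 2) (by linarith)] with t ht hupos0 hult hbd hgm hgp
  have htpos : (0 : ℝ) < t := by linarith
  have hupos : 0 < Fbar 0 t := hupos0
  have hdenpos : 0 < Fbar 0 t * ℓ (Fbar 0 t) :=
    mul_pos hupos (hℓpos _ hupos hult.le)
  -- rewrite the event via the margins
  have hseteq : {ω | ∃ i, t ^ (lam i * α 0 / α i) * w i < X i ω}
      = {ω | ∃ i, 1 - Fbar i (t ^ (lam i * α 0 / α i) * w i) < U ω i} := by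
    ext ω
    simp only [Set.mem_setOf_eq]
    refine exists_congr fun i => ?_
    have hspos : 0 < t ^ (lam i * α 0 / α i) * w i :=
      mul_pos (Real.rpow_pos_of_pos htpos _) (hw i)
    constructor
    · intro h
      have h2 := (hanti i) (Set.mem_Ioi.2 hspos) (Set.mem_Ioi.2 (hXpos i ω)) h
      rw [hX i ω] at h2
      linarith
    · intro h
      have hlt : Fbar i (X i ω) < Fbar i (t ^ (lam i * α 0 / α i) * w i) := by
        rw [hX i ω]; linarith
      exact ((hanti i).lt_iff_gt (Set.mem_Ioi.2 (hXpos i ω)) (Set.mem_Ioi.2 hspos)).1 hlt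
  -- bounds on q i
  have hq : ∀ i,
      (Fbar 0 t) ^ lam i * ((1 - δ) * v i) ≤ Fbar i (t ^ (lam i * α 0 / α i) * w i) ∧
      Fbar i (t ^ (lam i * α 0 / α i) * w i) ≤ (Fbar 0 t) ^ lam i * ((1 + δ) * v i) := by
    intro i
    have hpow : 0 < (Fbar 0 t) ^ lam i := Real.rpow_pos_of_pos hupos _
    obtain ⟨h1, h2⟩ := hbd i
    have hqe : Fbar i (t ^ (lam i * α 0 / α i) * w i)
        = (Fbar i (t ^ (lam i * α 0 / α i) * w i) / (Fbar 0 t) ^ lam i) *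
          (Fbar 0 t) ^ lam i := (div_mul_cancel₀ _ (ne_of_gt hpow)).symm
    constructor
    · calc (Fbar 0 t) ^ lam i * ((1 - δ) * v i)
          = ((1 - δ) * v i) * (Fbar 0 t) ^ lam i := by ring
        _ ≤ (Fbar i (t ^ (lam i * α 0 / α i) * w i) / (Fbar 0 t) ^ lam i) *
            (Fbar 0 t) ^ lam i := mul_le_mul_of_nonneg_right h1 hpow.le
        _ = Fbar i (t ^ (lam i * α 0 / α i) * w i) := hqe.symm
    · calc Fbar i (t ^ (lam i * α 0 / α i) * w i)
          = (Fbar i (t ^ (lam i * α 0 / α i) * w i) / (Fbar 0 t) ^ lam i) *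
            (Fbar 0 t) ^ lam i := hqe
        _ ≤ ((1 + δ) * v i) * (Fbar 0 t) ^ lam i := mul_le_mul_of_nonneg_right h2 hpow.le
        _ = (Fbar 0 t) ^ lam i * ((1 + δ) * v i) := by ring
  -- set inclusions
  have hsub1 : {ω | ∃ i, 1 - (Fbar 0 t) ^ lam i * ((1 - δ) * v i) < U ω i}
      ⊆ {ω | ∃ i, 1 - Fbar i (t ^ (lam i * α 0 / α i) * w i) < U ω i} := by
    rintro ω ⟨i, hi⟩
    exact ⟨i, by have := (hq i).1; linarith⟩
  have hsub2 : {ω | ∃ i, 1 - Fbar i (t ^ (lam i * α 0 / α i) * w i) < U ω i}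
      ⊆ {ω | ∃ i, 1 - (Fbar 0 t) ^ lam i * ((1 + δ) * v i) < U ω i} := by
    rintro ω ⟨i, hi⟩
    exact ⟨i, by have := (hq i).2; linarith⟩
  have hPm := ENNReal.toReal_mono (measure_ne_top P _) (measure_mono hsub1)
  have hPp := ENNReal.toReal_mono (measure_ne_top P _) (measure_mono hsub2)
  simp only [Function.comp_apply, Real.dist_eq] at hgm hgp
  rw [hseteq, Real.dist_eq, abs_lt]
  rw [abs_lt] at hgm hgp hm hp
  have hle1 : (P {ω | ∃ i, 1 - (Fbar 0 t) ^ lam i * ((1 - δ) * v i) < U ω i}).toReal /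
      (Fbar 0 t * ℓ (Fbar 0 t)) ≤
      (P {ω | ∃ i, 1 - Fbar i (t ^ (lam i * α 0 / α i) * w i) < U ω i}).toReal /
      (Fbar 0 t * ℓ (Fbar 0 t)) := by gcongr
  have hle2 : (P {ω | ∃ i, 1 - Fbar i (t ^ (lam i * α 0 / α i) * w i) < U ω i}).toReal /
      (Fbar 0 t * ℓ (Fbar 0 t)) ≤
      (P {ω | ∃ i, 1 - (Fbar 0 t) ^ lam i * ((1 + δ) * v i) < U ω i}).toReal /
      (Fbar 0 t * ℓ (Fbar 0 t)) := by gcongr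
  constructor <;> [linarith [hgm.1, hgm.2, hm.1, hm.2]; linarith [hgp.1, hgp.2, hp.1, hp.2]]
end

section
/- Let Ĉ(u₁,u₂) = [1 + (u₁^{−1/β}−1)/(1+λ) + (u₂^{−1/β}−1)/(1+λ) + (λ/(1+λ)) max{u₁^{−1/β}−1, u₂^{−1/β}−1}]^{−β} with λ, β > 0. Then for all w₁, w₂ > 0, lim_{u→0⁺} (u w₁ + u w₂ − Ĉ(u w₁, u w₂))/u = w₁ + w₂ − [(w₁^{−1/β} + w₂^{−1/β})/(1+λ) + (λ/(1+λ)) max{w₁^{−1/β}, w₂^{−1/β}}]^{−β}. -/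
open Filter

/-- Standard lower exponent function of the survival copula of the bivariate Pareto of the
fourth kind: with
`Ĉ(u₁,u₂) = [1 + (u₁^{−1/β}−1)/(1+λ) + (u₂^{−1/β}−1)/(1+λ)
            + (λ/(1+λ)) max{u₁^{−1/β}−1, u₂^{−1/β}−1}]^{−β}`,
for all `w₁, w₂ > 0`, `(u w₁ + u w₂ − Ĉ(u w₁, u w₂))/u →
  w₁ + w₂ − [(w₁^{−1/β} + w₂^{−1/β})/(1+λ) + (λ/(1+λ)) max{w₁^{−1/β}, w₂^{−1/β}}]^{−β}`
as `u → 0⁺`. -/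
theorem bivariate_pareto_copula_exponent (lam β : ℝ) (hlam : 0 < lam) (hβ : 0 < β)
    (w1 w2 : ℝ) (hw1 : 0 < w1) (hw2 : 0 < w2) :
    Tendsto (fun u : ℝ =>
        (u * w1 + u * w2 -
            (1 + ((u * w1) ^ (-(1 / β)) - 1) / (1 + lam) +
                ((u * w2) ^ (-(1 / β)) - 1) / (1 + lam) +
                (lam / (1 + lam)) *
                  max ((u * w1) ^ (-(1 / β)) - 1) ((u * w2) ^ (-(1 / β)) - 1)) ^ (-β)) / u)
      (nhdsWithin 0 (Set.Ioi 0))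
      (nhds (w1 + w2 -
        ((w1 ^ (-(1 / β)) + w2 ^ (-(1 / β))) / (1 + lam) +
            (lam / (1 + lam)) * max (w1 ^ (-(1 / β))) (w2 ^ (-(1 / β)))) ^ (-β))) := by
  have h1l : (0:ℝ) < 1 + lam := by linarith
  set a := w1 ^ (-(1 / β)) with ha
  set b := w2 ^ (-(1 / β)) with hb
  have ha0 : 0 < a := Real.rpow_pos_of_pos hw1 _
  have hb0 : 0 < b := Real.rpow_pos_of_pos hw2 _
  set K : ℝ := (a + b) / (1 + lam) + lam / (1 + lam) * max a b with hKdef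
  have hm0 : 0 < max a b := lt_max_of_lt_left ha0
  have hK0 : 0 < K :=
    add_pos (div_pos (by linarith) h1l) (mul_pos (div_pos hlam h1l) hm0)
  -- u ^ (1/β) tends to 0
  have hs : Tendsto (fun u : ℝ => u ^ (1 / β)) (nhdsWithin 0 (Set.Ioi 0)) (nhds 0) := by
    have hc : ContinuousAt (fun u : ℝ => u ^ (1 / β)) 0 :=
      Real.continuousAt_rpow_const 0 (1 / β) (Or.inr (by positivity))
    have h2 : Tendsto (fun u : ℝ => u ^ (1 / β)) (nhdsWithin 0 (Set.Ioi 0))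
        (nhds ((0:ℝ) ^ (1 / β))) := hc.tendsto.mono_left nhdsWithin_le_nhds
    rwa [Real.zero_rpow (one_div_ne_zero hβ.ne')] at h2
  have hev : ∀ᶠ u in nhdsWithin (0:ℝ) (Set.Ioi 0),
      (u * w1 + u * w2 -
            (1 + ((u * w1) ^ (-(1 / β)) - 1) / (1 + lam) +
                ((u * w2) ^ (-(1 / β)) - 1) / (1 + lam) +
                (lam / (1 + lam)) *
                  max ((u * w1) ^ (-(1 / β)) - 1) ((u * w2) ^ (-(1 / β)) - 1)) ^ (-β)) / u
        = w1 + w2 - (K - (1 / (1 + lam)) * u ^ (1 / β)) ^ (-β) := by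
    have hlt : ∀ᶠ u in nhdsWithin (0:ℝ) (Set.Ioi 0),
        (1 / (1 + lam)) * u ^ (1 / β) < K := by
      have := (hs.const_mul (1 / (1 + lam)))
      exact Filter.Tendsto.eventually_lt_const (by simpa using hK0) this
    filter_upwards [hlt, self_mem_nhdsWithin] with u hlt hu
    have hu : (0:ℝ) < u := hu
    set t := u ^ (-(1 / β)) with ht
    set s := u ^ (1 / β) with hsdef
    have hs0 : 0 < s := Real.rpow_pos_of_pos hu _
    have ht0 : 0 < t := Real.rpow_pos_of_pos hu _
    have hts : t = s⁻¹ := by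
      rw [ht, hsdef, Real.rpow_neg hu.le]
    have hst1 : s * t = 1 := by
      rw [hts]; exact mul_inv_cancel₀ hs0.ne'
    -- rewrite the rpow factors
    have e1 : (u * w1) ^ (-(1 / β)) = t * a := Real.mul_rpow hu.le hw1.le
    have e2 : (u * w2) ^ (-(1 / β)) = t * b := Real.mul_rpow hu.le hw2.le
    have emax : max ((u * w1) ^ (-(1 / β)) - 1) ((u * w2) ^ (-(1 / β)) - 1)
        = t * max a b - 1 := by
      rw [e1, e2, max_sub_sub_right, mul_max_of_nonneg _ _ ht0.le]
    have ebr : 1 + ((u * w1) ^ (-(1 / β)) - 1) / (1 + lam) +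
        ((u * w2) ^ (-(1 / β)) - 1) / (1 + lam) +
        (lam / (1 + lam)) *
          max ((u * w1) ^ (-(1 / β)) - 1) ((u * w2) ^ (-(1 / β)) - 1)
        = t * K - 1 / (1 + lam) := by
      rw [emax, e1, e2, hKdef]
      field_simp
      ring
    have hfac : t * K - 1 / (1 + lam) = (K - (1 / (1 + lam)) * s) * t := by
      have : (K - (1 / (1 + lam)) * s) * t = K * t - (1 / (1 + lam)) * (s * t) := by ring
      rw [this, hst1]; ring
    have hKs : 0 < K - (1 / (1 + lam)) * s := by linarith
    have etpow : t ^ (-β) = u := by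
      rw [ht, ← Real.rpow_mul hu.le]
      rw [show -(1 / β) * -β = 1 by field_simp]
      exact Real.rpow_one u
    have emain : (t * K - 1 / (1 + lam)) ^ (-β)
        = (K - (1 / (1 + lam)) * s) ^ (-β) * u := by
      rw [hfac, Real.mul_rpow hKs.le ht0.le, etpow]
    rw [ebr, emain]
    field_simp
  have hlim : Tendsto (fun u : ℝ => w1 + w2 - (K - (1 / (1 + lam)) * u ^ (1 / β)) ^ (-β))
      (nhdsWithin 0 (Set.Ioi 0)) (nhds (w1 + w2 - K ^ (-β))) := by
    have h1 : Tendsto (fun u : ℝ => K - (1 / (1 + lam)) * u ^ (1 / β))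
        (nhdsWithin 0 (Set.Ioi 0)) (nhds K) := by
      have := (hs.const_mul (1 / (1 + lam))).const_sub K
      simpa using this
    have h2 : ContinuousAt (fun x : ℝ => x ^ (-β)) K :=
      Real.continuousAt_rpow_const K (-β) (Or.inl hK0.ne')
    exact tendsto_const_nhds.sub (h2.tendsto.comp h1)
  exact hlim.congr' (hev.mono fun u h => h.symm)
end
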